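/- Second-order product rule: Let X be a real locally convex topological vector space, f : X → ℝ, g : X → ℝ, x ∈ X and η₁, η₂ ∈ X. Suppose f and g have chain differentials in the direction η₁ at every point of a neighbourhood of x, have chain differentials at x in the direction η₂, and have second-order chain differentials δ²f(x; η₁, η₂) and δ²g(x; η₁, η₂). Then f · g has a second-order chain differential at x in the directions η₁, η₂, and δ²(f · g)(x; η₁, η₂) = δ²f(x; η₁, η₂) · g(x) + δf(x; η₁) · δg(x; η₂) + δf(x; η₂) · δg(x; η₁) + f(x) · δ²g(x; η₁, η₂). -/

import Mathlib

open Filter Topology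

/-- `f` has chain differential `v` at the point `x` in the direction `η`:
for every sequence `ηm → η` and every sequence of nonzero reals `θm → 0`,
`θm⁻¹ • (f (x + θm • ηm) - f x) → v`. -/
def HasChainDiff {X Y : Type*} [AddCommGroup X] [Module ℝ X] [TopologicalSpace X]
    [AddCommGroup Y] [Module ℝ Y] [TopologicalSpace Y]
    (f : X → Y) (x η : X) (v : Y) : Prop :=
  ∀ (ηm : ℕ → X) (θm : ℕ → ℝ), Tendsto ηm atTop (𝓝 η) → (∀ m, θm m ≠ 0) →
    Tendsto θm atTop (𝓝 (0 : ℝ)) →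
    Tendsto (fun m => (θm m)⁻¹ • (f (x + θm m • ηm m) - f x)) atTop (𝓝 v)

/-- `n`-th order chain differential, defined recursively: `δⁿ f(x; η₁,…,ηₙ)` is the
chain differential of `y ↦ δ^{n-1} f(y; η₁,…,η_{n-1})` (a function defined on a
neighbourhood of `x`) at `x` in the direction `ηₙ`; by convention `δ⁰ f(x) = f x`. -/
def HasChainDiffN {X Y : Type*} [AddCommGroup X] [Module ℝ X] [TopologicalSpace X]
    [AddCommGroup Y] [Module ℝ Y] [TopologicalSpace Y]
    (f : X → Y) : (n : ℕ) → (Fin n → X) → X → Y → Prop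
  | 0, _, x, v => f x = v
  | n + 1, η, x, v => ∃ D : X → Y,
      (∀ᶠ y in 𝓝 x, HasChainDiffN f n (Fin.init η) y (D y)) ∧
      HasChainDiff D x (η (Fin.last n)) v

/-- The directions `(η_i)_{i ∈ I}`, listed in increasing order of the index. -/
def dirsOf {X : Type*} {n : ℕ} (η : Fin n → X) (I : Finset (Fin n)) : Fin I.card → X :=
  fun j => η ((I.orderIsoOfFin rfl j : I) : Fin n)


section Aux

variable {X : Type*} [AddCommGroup X] [Module ℝ X] [TopologicalSpace X]
  [IsTopologicalAddGroup X] [ContinuousSMul ℝ X]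

private lemma tendsto_base {ηm : ℕ → X} {θm : ℕ → ℝ} {η : X} (x : X)
    (hη : Tendsto ηm atTop (𝓝 η)) (hθ0 : Tendsto θm atTop (𝓝 0)) :
    Tendsto (fun m => x + θm m • ηm m) atTop (𝓝 x) := by
  have h : Tendsto (fun m => θm m • ηm m) atTop (𝓝 ((0:ℝ) • η)) := hθ0.smul hη
  rw [zero_smul] at h
  simpa using tendsto_const_nhds.add h

private lemma HasChainDiff.congr_ev {f g : X → ℝ} {x η : X} {v : ℝ}
    (h : HasChainDiff f x η v) (hfg : f =ᶠ[𝓝 x] g) : HasChainDiff g x η v := by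
  intro ηm θm hη hθ hθ0
  have hx : g x = f x := hfg.self_of_nhds.symm
  have hmem := (tendsto_base x hη hθ0).eventually hfg
  refine (h ηm θm hη hθ hθ0).congr' ?_
  filter_upwards [hmem] with m hm
  rw [hm, hx]

private lemma HasChainDiff.unique' {f : X → ℝ} {x η : X} {v w : ℝ}
    (hv : HasChainDiff f x η v) (hw : HasChainDiff f x η w) : v = w := by
  have hθ : Tendsto (fun m : ℕ => (1 : ℝ)/(m+1)) atTop (𝓝 0) :=
    tendsto_one_div_add_atTop_nhds_zero_nat
  have hne : ∀ m : ℕ, (1:ℝ)/(m+1) ≠ 0 := fun m => by positivity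
  exact tendsto_nhds_unique (hv _ _ tendsto_const_nhds hne hθ)
    (hw _ _ tendsto_const_nhds hne hθ)

private lemma HasChainDiff.mul' {f g : X → ℝ} {x η : X} {vf vg : ℝ}
    (hf : HasChainDiff f x η vf) (hg : HasChainDiff g x η vg) :
    HasChainDiff (fun y => f y * g y) x η (vf * g x + f x * vg) := by
  intro ηm θm hη hθ hθ0
  have A := hf ηm θm hη hθ hθ0
  have B := hg ηm θm hη hθ hθ0
  have hg' : Tendsto (fun m => g (x + θm m • ηm m)) atTop (𝓝 (g x)) := by
    have h2 := hθ0.smul B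
    rw [zero_smul] at h2
    have h3 : Tendsto (fun m => g x + θm m • ((θm m)⁻¹ • (g (x + θm m • ηm m) - g x)))
        atTop (𝓝 (g x + 0)) := tendsto_const_nhds.add h2
    rw [add_zero] at h3
    refine h3.congr fun m => ?_
    rw [smul_inv_smul₀ (hθ m)]
    ring
  have hc : Tendsto (fun m => f x * ((θm m)⁻¹ • (g (x + θm m • ηm m) - g x)))
      atTop (𝓝 (f x * vg)) := tendsto_const_nhds.mul B
  have key := (A.mul hg').add hc
  refine key.congr fun m => ?_
  have h := hθ m
  simp only [smul_eq_mul]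
  field_simp
  ring

private lemma HasChainDiff.add' {f g : X → ℝ} {x η : X} {vf vg : ℝ}
    (hf : HasChainDiff f x η vf) (hg : HasChainDiff g x η vg) :
    HasChainDiff (fun y => f y + g y) x η (vf + vg) := by
  intro ηm θm hη hθ hθ0
  have A := hf ηm θm hη hθ hθ0
  have B := hg ηm θm hη hθ hθ0
  refine (A.add B).congr fun m => ?_
  simp only [smul_eq_mul]
  ring

private lemma hasChainDiffN_one_iff {f : X → ℝ} {η : Fin 1 → X} {y : X} {w : ℝ} :
    HasChainDiffN f 1 η y w ↔ HasChainDiff f y (η 0) w := by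
  constructor
  · rintro ⟨D, hev, hD⟩
    simp only [HasChainDiffN] at hev
    have hfd : D =ᶠ[𝓝 y] f := hev.mono fun z hz => hz.symm
    have h := hD.congr_ev hfd
    simpa using h
  · intro h
    refine ⟨f, Filter.Eventually.of_forall fun z => rfl, ?_⟩
    simpa using h

end Aux

/-- Second-order product rule for chain differentials. -/
theorem product_rule_second_order
    {X : Type*}
    [AddCommGroup X] [Module ℝ X] [TopologicalSpace X] [IsTopologicalAddGroup X]
    [ContinuousSMul ℝ X] [LocallyConvexSpace ℝ X]
    (f g : X → ℝ) (x η₁ η₂ : X)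
    (Df₁ Dg₁ : X → ℝ) (f₂ g₂ d2f d2g : ℝ)
    (hf₁ : ∀ᶠ y in 𝓝 x, HasChainDiff f y η₁ (Df₁ y))
    (hg₁ : ∀ᶠ y in 𝓝 x, HasChainDiff g y η₁ (Dg₁ y))
    (hf₂ : HasChainDiff f x η₂ f₂) (hg₂ : HasChainDiff g x η₂ g₂)
    (h2f : HasChainDiffN f 2 ![η₁, η₂] x d2f)
    (h2g : HasChainDiffN g 2 ![η₁, η₂] x d2g) :
    HasChainDiffN (fun y => f y * g y) 2 ![η₁, η₂] x
      (d2f * g x + Df₁ x * g₂ + f₂ * Dg₁ x + f x * d2g) := by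
  obtain ⟨Df, hDf_ev, hDf⟩ := h2f
  obtain ⟨Dg, hDg_ev, hDg⟩ := h2g
  have hdir0 : (Fin.init ![η₁, η₂]) 0 = η₁ := rfl
  have hdir1 : (![η₁, η₂] : Fin 2 → X) (Fin.last 1) = η₂ := rfl
  have hDfDf₁ : Df =ᶠ[𝓝 x] Df₁ := by
    filter_upwards [hDf_ev, hf₁] with y h1 h2
    have h1' := hasChainDiffN_one_iff.mp h1
    rw [hdir0] at h1'
    exact h1'.unique' h2
  have hDgDg₁ : Dg =ᶠ[𝓝 x] Dg₁ := by
    filter_upwards [hDg_ev, hg₁] with y h1 h2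
    have h1' := hasChainDiffN_one_iff.mp h1
    rw [hdir0] at h1'
    exact h1'.unique' h2
  have hDf' : HasChainDiff Df₁ x η₂ d2f := by
    have := hDf.congr_ev hDfDf₁
    rwa [hdir1] at this
  have hDg' : HasChainDiff Dg₁ x η₂ d2g := by
    have := hDg.congr_ev hDgDg₁
    rwa [hdir1] at this
  refine ⟨fun y => Df₁ y * g y + f y * Dg₁ y, ?_, ?_⟩
  · filter_upwards [hf₁, hg₁] with y hfy hgy
    rw [hasChainDiffN_one_iff, hdir0]
    exact hfy.mul' hgy
  · rw [hdir1]
    have h1 := hDf'.mul' hg₂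
    have h2 := hf₂.mul' hDg'
    have h3 := h1.add' h2
    have heq : d2f * g x + Df₁ x * g₂ + f₂ * Dg₁ x + f x * d2g
        = (d2f * g x + Df₁ x * g₂) + (f₂ * Dg₁ x + f x * d2g) := by ring
    rw [heq]
    exact h3
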